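/- (Bellman residual bound for Peng's Q(λ) with behavior policy updates.) Fix λ ∈ [0,1] and α ∈ [1−λ, 1]. Let μ_{−1} be an arbitrary policy and Q_0 : X → A → ℝ arbitrary. For each k ≥ 0, let π_k be any policy greedy with respect to Q_k, set μ_k := α π_k + (1−α) μ_{k−1}, and define Q_{k+1} := N_λ^{μ_k,π_k} Q_k + ε_k for arbitrary error functions ε_k : X → A → ℝ. Write ρ_l := λμ_l + (1−λ)π_l, b_l := Q_l − T^{ρ_l} Q_l, and A_l := γ(1−λ)·P^{π_l} ∘ (I − γλP^{μ_l})⁻¹. Then for every k ≥ 0, b_k ≤ A_{k−1}⋯A_0 b_0 + ∑_{l=0}^{k−1} A_{k−1}⋯A_{l+1}((I − γP^{ρ_l}) ε_l) pointwise, where an empty composition of operators is the identity. -/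

import Mathlib

open scoped BigOperators

namespace RLPQL

variable {X A : Type*} [Fintype X] [Fintype A]

/-- `P` is a transition kernel: nonnegative and rows sum to one. -/
def IsKernel (P : X → A → X → ℝ) : Prop :=
  (∀ x a y, 0 ≤ P x a y) ∧ ∀ x a, ∑ y, P x a y = 1

/-- `π` is a (Markov) policy: nonnegative and sums to one over actions. -/
def IsPolicy (π : X → A → ℝ) : Prop :=
  (∀ x a, 0 ≤ π x a) ∧ ∀ x, ∑ a, π x a = 1

/-- `(πQ)(x) = ∑_a π x a * Q x a`. -/
def polQ (π Q : X → A → ℝ) : X → ℝ := fun x => ∑ a, π x a * Q x a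

/-- `(PV)(x,a) = ∑_y P x a y * V y`. -/
def PV (P : X → A → X → ℝ) (V : X → ℝ) : X → A → ℝ := fun x a => ∑ y, P x a y * V y

/-- `P^π Q = P (π Q)`. -/
def Ppol (P : X → A → X → ℝ) (π Q : X → A → ℝ) : X → A → ℝ := PV P (polQ π Q)

/-- Bellman operator `T^π Q = r + γ P^π Q`. -/
def bellman (P : X → A → X → ℝ) (r : X → A → ℝ) (γ : ℝ) (π Q : X → A → ℝ) : X → A → ℝ :=
  fun x a => r x a + γ * Ppol P π Q x a

/-- Bellman optimality operator `(T Q)(x,a) = r x a + γ ∑_y P x a y * max_b Q y b`. -/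
noncomputable def optBellman (P : X → A → X → ℝ) (r : X → A → ℝ) (γ : ℝ) (Q : X → A → ℝ) :
    X → A → ℝ :=
  fun x a => r x a + γ * ∑ y, P x a y * (⨆ b, Q y b)

/-- `π` is greedy with respect to `Q`. -/
def IsGreedy (π Q : X → A → ℝ) : Prop := ∀ x, polQ π Q x = ⨆ a, Q x a

/-- `(I - c P^μ)⁻¹ f = ∑_{t=0}^∞ c^t (P^μ)^t f`. -/
noncomputable def resolvent (P : X → A → X → ℝ) (c : ℝ) (μ : X → A → ℝ) (f : X → A → ℝ) :
    X → A → ℝ :=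
  fun x a => ∑' t : ℕ, c ^ t * ((Ppol P μ)^[t] f) x a

/-- Peng's Q(λ) operator `N_λ^{μ,π} Q = (I - γλ P^μ)⁻¹ (r + γ(1-λ) P^π Q)`. -/
noncomputable def peng (P : X → A → X → ℝ) (r : X → A → ℝ) (γ lam : ℝ) (μ π Q : X → A → ℝ) :
    X → A → ℝ :=
  resolvent P (γ * lam) μ (fun x a => r x a + γ * (1 - lam) * Ppol P π Q x a)

/-- The mixture policy `c·μ + (1-c)·π`. -/
def mixP (c : ℝ) (μ π : X → A → ℝ) : X → A → ℝ := fun x a => c * μ x a + (1 - c) * π x a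

end RLPQL

open RLPQL

namespace RLPQL

/-- `opProd Aop m n = A_{m+n-1} ∘ ⋯ ∘ A_m` (the identity when `n = 0`). -/
def opProd {F : Type*} (Aop : ℕ → F → F) (m : ℕ) : ℕ → F → F
  | 0 => id
  | n + 1 => Aop (m + n) ∘ opProd Aop m n

variable {X A : Type*} [Fintype X] [Fintype A]

/-- The linear operator `A_l := γ(1-λ)·P^{π_l} ∘ (I - γλP^{μ_l})⁻¹`. -/
noncomputable def Aop (P : X → A → X → ℝ) (γ lam : ℝ) (μl πl : X → A → ℝ)
    (f : X → A → ℝ) : X → A → ℝ :=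
  fun x a => γ * (1 - lam) * Ppol P πl (resolvent P (γ * lam) μl f) x a

end RLPQL

set_option linter.unusedSectionVars false
set_option linter.unusedVariables false
set_option maxHeartbeats 1000000

namespace PQLAux

variable {X A : Type*} [Fintype X] [Fintype A]

lemma avg_abs_le {ι : Type*} [Fintype ι] (w v : ι → ℝ) (hw : ∀ i, 0 ≤ w i)
    (hw1 : ∑ i, w i = 1) {B : ℝ} (hv : ∀ i, |v i| ≤ B) :
    |∑ i, w i * v i| ≤ B := by
  calc |∑ i, w i * v i| ≤ ∑ i, |w i * v i| := Finset.abs_sum_le_sum_abs _ _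
    _ = ∑ i, w i * |v i| := by
        refine Finset.sum_congr rfl fun i _ => ?_
        rw [abs_mul, abs_of_nonneg (hw i)]
    _ ≤ ∑ i, w i * B := Finset.sum_le_sum (fun i _ => mul_le_mul_of_nonneg_left (hv i) (hw i))
    _ = B := by rw [← Finset.sum_mul, hw1, one_mul]

lemma avg_le_avg {ι : Type*} [Fintype ι] (w u v : ι → ℝ) (hw : ∀ i, 0 ≤ w i)
    (h : ∀ i, u i ≤ v i) : ∑ i, w i * u i ≤ ∑ i, w i * v i :=
  Finset.sum_le_sum fun i _ => mul_le_mul_of_nonneg_left (h i) (hw i)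

lemma Ppol_bound {P : X → A → X → ℝ} {μ : X → A → ℝ} (hP : IsKernel P) (hμ : IsPolicy μ)
    {f : X → A → ℝ} {B : ℝ} (hf : ∀ x a, |f x a| ≤ B) : ∀ x a, |Ppol P μ f x a| ≤ B := by
  intro x a
  show |∑ y, P x a y * polQ μ f y| ≤ B
  refine avg_abs_le _ _ (hP.1 x a) (hP.2 x a) fun y => ?_
  exact avg_abs_le _ _ (hμ.1 y) (hμ.2 y) (hf y)

lemma iter_bound {P : X → A → X → ℝ} {μ : X → A → ℝ} (hP : IsKernel P) (hμ : IsPolicy μ)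
    {f : X → A → ℝ} {B : ℝ} (hf : ∀ x a, |f x a| ≤ B) :
    ∀ t x a, |((Ppol P μ)^[t] f) x a| ≤ B := by
  intro t
  induction t with
  | zero => exact hf
  | succ t ih =>
      intro x a
      rw [Function.iterate_succ_apply']
      exact Ppol_bound hP hμ ih x a

lemma exists_bound (f : X → A → ℝ) : ∀ x a, |f x a| ≤ ∑ x, ∑ a, |f x a| := by
  intro x a
  calc |f x a| ≤ ∑ a, |f x a| :=
        Finset.single_le_sum (f := fun b => |f x b|) (fun b _ => abs_nonneg _) (Finset.mem_univ a)
    _ ≤ ∑ x, ∑ a, |f x a| :=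
        Finset.single_le_sum (f := fun y => ∑ a, |f y a|)
          (fun y _ => Finset.sum_nonneg fun b _ => abs_nonneg _) (Finset.mem_univ x)

lemma summable_res {P : X → A → X → ℝ} {μ : X → A → ℝ} (hP : IsKernel P) (hμ : IsPolicy μ)
    {c : ℝ} (hc0 : 0 ≤ c) (hc1 : c < 1) (f : X → A → ℝ) (x : X) (a : A) :
    Summable (fun t : ℕ => c ^ t * ((Ppol P μ)^[t] f) x a) := by
  set B := ∑ x, ∑ a, |f x a| with hB
  refine Summable.of_norm_bounded
    ((summable_geometric_of_lt_one hc0 hc1).mul_left B) fun t => ?_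
  rw [Real.norm_eq_abs, abs_mul, abs_pow, abs_of_nonneg hc0, mul_comm]
  exact mul_le_mul_of_nonneg_right (iter_bound hP hμ (exists_bound f) t x a) (pow_nonneg hc0 t)


variable {P : X → A → X → ℝ} {μ ν : X → A → ℝ} {c : ℝ}

lemma Ppol_add (f g : X → A → ℝ) :
    Ppol P ν (fun x a => f x a + g x a) = fun x a => Ppol P ν f x a + Ppol P ν g x a := by
  funext x a
  show (∑ y, P x a y * ∑ b, ν y b * (f y b + g y b)) = _
  simp only [mul_add, Finset.sum_add_distrib]
  rfl

lemma Ppol_sub (f g : X → A → ℝ) :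
    Ppol P ν (fun x a => f x a - g x a) = fun x a => Ppol P ν f x a - Ppol P ν g x a := by
  funext x a
  show (∑ y, P x a y * ∑ b, ν y b * (f y b - g y b)) = _
  simp only [mul_sub, Finset.sum_sub_distrib]
  rfl

lemma Ppol_smul (s : ℝ) (f : X → A → ℝ) :
    Ppol P ν (fun x a => s * f x a) = fun x a => s * Ppol P ν f x a := by
  funext x a
  show (∑ y, P x a y * ∑ b, ν y b * (s * f y b)) = s * ∑ y, P x a y * ∑ b, ν y b * f y b
  rw [Finset.mul_sum]
  refine Finset.sum_congr rfl fun y _ => ?_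
  rw [Finset.mul_sum, Finset.mul_sum, Finset.mul_sum]
  refine Finset.sum_congr rfl fun b _ => by ring

lemma Ppol_mono (hP : IsKernel P) (hν : IsPolicy ν) {f g : X → A → ℝ}
    (h : ∀ x a, f x a ≤ g x a) : ∀ x a, Ppol P ν f x a ≤ Ppol P ν g x a := by
  intro x a
  show (∑ y, P x a y * polQ ν f y) ≤ ∑ y, P x a y * polQ ν g y
  refine avg_le_avg _ _ _ (hP.1 x a) fun y => ?_
  exact avg_le_avg _ _ _ (hν.1 y) (h y)

lemma iter_add' (f g : X → A → ℝ) (t : ℕ) :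
    (Ppol P μ)^[t] (fun x a => f x a + g x a)
      = fun x a => ((Ppol P μ)^[t] f) x a + ((Ppol P μ)^[t] g) x a := by
  induction t with
  | zero => rfl
  | succ t ih =>
      rw [Function.iterate_succ_apply', Function.iterate_succ_apply',
        Function.iterate_succ_apply', ih]
      exact Ppol_add _ _

lemma iter_sub (f g : X → A → ℝ) (t : ℕ) :
    (Ppol P μ)^[t] (fun x a => f x a - g x a)
      = fun x a => ((Ppol P μ)^[t] f) x a - ((Ppol P μ)^[t] g) x a := by
  induction t with
  | zero => rfl
  | succ t ih =>
      rw [Function.iterate_succ_apply', Function.iterate_succ_apply',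
        Function.iterate_succ_apply', ih]
      exact Ppol_sub _ _

lemma iter_smul (s : ℝ) (f : X → A → ℝ) (t : ℕ) :
    (Ppol P μ)^[t] (fun x a => s * f x a) = fun x a => s * ((Ppol P μ)^[t] f) x a := by
  induction t with
  | zero => rfl
  | succ t ih =>
      rw [Function.iterate_succ_apply', Function.iterate_succ_apply', ih]
      exact Ppol_smul _ _

lemma iter_mono (hP : IsKernel P) (hμ : IsPolicy μ) {f g : X → A → ℝ}
    (h : ∀ x a, f x a ≤ g x a) (t : ℕ) :
    ∀ x a, ((Ppol P μ)^[t] f) x a ≤ ((Ppol P μ)^[t] g) x a := by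
  induction t with
  | zero => exact h
  | succ t ih =>
      intro x a
      rw [Function.iterate_succ_apply', Function.iterate_succ_apply']
      exact Ppol_mono hP hμ ih x a

section Res

variable (hP : IsKernel P) (hμ : IsPolicy μ) (hc0 : 0 ≤ c) (hc1 : c < 1)
include hP hμ hc0 hc1

lemma res_add' (f g : X → A → ℝ) (x : X) (a : A) :
    resolvent P c μ (fun x a => f x a + g x a) x a
      = resolvent P c μ f x a + resolvent P c μ g x a := by
  show (∑' t : ℕ, c ^ t * ((Ppol P μ)^[t] fun x a => f x a + g x a) x a) = _
  have key : ∀ t : ℕ, c ^ t * ((Ppol P μ)^[t] fun x a => f x a + g x a) x a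
      = c ^ t * ((Ppol P μ)^[t] f) x a + c ^ t * ((Ppol P μ)^[t] g) x a := by
    intro t; rw [iter_add']; ring
  rw [tsum_congr key, Summable.tsum_add (summable_res hP hμ hc0 hc1 f x a)
    (summable_res hP hμ hc0 hc1 g x a)]
  rfl

lemma res_sub (f g : X → A → ℝ) (x : X) (a : A) :
    resolvent P c μ (fun x a => f x a - g x a) x a
      = resolvent P c μ f x a - resolvent P c μ g x a := by
  show (∑' t : ℕ, c ^ t * ((Ppol P μ)^[t] fun x a => f x a - g x a) x a) = _
  have : ∀ t : ℕ, c ^ t * ((Ppol P μ)^[t] fun x a => f x a - g x a) x a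
      = c ^ t * ((Ppol P μ)^[t] f) x a - c ^ t * ((Ppol P μ)^[t] g) x a := by
    intro t; rw [iter_sub]; ring
  rw [tsum_congr this, Summable.tsum_sub (summable_res hP hμ hc0 hc1 f x a)
    (summable_res hP hμ hc0 hc1 g x a)]
  rfl

lemma res_mono {f g : X → A → ℝ} (h : ∀ x a, f x a ≤ g x a) (x : X) (a : A) :
    resolvent P c μ f x a ≤ resolvent P c μ g x a := by
  refine Summable.tsum_le_tsum (fun t => ?_) (summable_res hP hμ hc0 hc1 f x a)
    (summable_res hP hμ hc0 hc1 g x a)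
  exact mul_le_mul_of_nonneg_left (iter_mono hP hμ h t x a) (pow_nonneg hc0 t)

lemma res_shift (f : X → A → ℝ) (x : X) (a : A) :
    resolvent P c μ f x a = f x a + c * resolvent P c μ (Ppol P μ f) x a := by
  show (∑' t : ℕ, c ^ t * ((Ppol P μ)^[t] f) x a) = _
  rw [Summable.tsum_eq_zero_add (summable_res hP hμ hc0 hc1 f x a)]
  congr 1
  · simp
  · rw [show (resolvent P c μ (Ppol P μ f) x a)
        = ∑' t : ℕ, c ^ t * ((Ppol P μ)^[t] (Ppol P μ f)) x a from rfl, ← tsum_mul_left]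
    refine tsum_congr fun t => ?_
    rw [Function.iterate_succ_apply, pow_succ']
    ring

omit hP hμ hc0 hc1 in
lemma Ppol_tsum (h : ℕ → X → A → ℝ) (hsum : ∀ y b, Summable fun t => h t y b) (x : X) (a : A) :
    Ppol P ν (fun y b => ∑' t : ℕ, h t y b) x a = ∑' t : ℕ, Ppol P ν (h t) x a := by
  show (∑ y, P x a y * ∑ b, ν y b * ∑' t : ℕ, h t y b)
      = ∑' t : ℕ, ∑ y, P x a y * ∑ b, ν y b * h t y b
  have step1 : ∀ y, (∑ b, ν y b * ∑' t : ℕ, h t y b) = ∑' t : ℕ, ∑ b, ν y b * h t y b := by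
    intro y
    calc (∑ b, ν y b * ∑' t : ℕ, h t y b)
        = ∑ b, ∑' t : ℕ, ν y b * h t y b :=
          Finset.sum_congr rfl fun b _ => (tsum_mul_left).symm
      _ = ∑' t : ℕ, ∑ b, ν y b * h t y b :=
          (Summable.tsum_finsetSum (fun b _ => (hsum y b).mul_left _)).symm
  have hsum2 : ∀ y, Summable fun t : ℕ => ∑ b, ν y b * h t y b := by
    intro y
    exact summable_sum (fun b _ => (hsum y b).mul_left _)
  calc (∑ y, P x a y * ∑ b, ν y b * ∑' t : ℕ, h t y b)
      = ∑ y, ∑' t : ℕ, P x a y * ∑ b, ν y b * h t y b := by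
        refine Finset.sum_congr rfl fun y _ => ?_
        rw [step1 y, tsum_mul_left]
    _ = ∑' t : ℕ, ∑ y, P x a y * ∑ b, ν y b * h t y b := by
        rw [← Summable.tsum_finsetSum (fun y _ => ((hsum2 y).mul_left _))]

omit hP hμ hc0 hc1 in
lemma Ppol_congr {f g : X → A → ℝ} (h : ∀ x a, f x a = g x a) (x : X) (a : A) :
    Ppol P ν f x a = Ppol P ν g x a := by
  have : f = g := funext fun x => funext fun a => h x a
  rw [this]

lemma Ppol_res (_hν : IsPolicy ν) (f : X → A → ℝ) (x : X) (a : A) :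
    Ppol P ν (resolvent P c μ f) x a
      = ∑' t : ℕ, c ^ t * Ppol P ν ((Ppol P μ)^[t] f) x a := by
  have := Ppol_tsum (ν := ν) (P := P) (fun t y b => c ^ t * ((Ppol P μ)^[t] f) y b)
    (fun y b => summable_res hP hμ hc0 hc1 f y b) x a
  rw [show resolvent P c μ f = fun y b => ∑' t : ℕ, c ^ t * ((Ppol P μ)^[t] f) y b from rfl,
    this]
  refine tsum_congr fun t => ?_
  rw [show Ppol P ν (fun y b => c ^ t * ((Ppol P μ)^[t] f) y b) x a
      = (c ^ t * Ppol P ν ((Ppol P μ)^[t] f) x a) from congrFun (congrFun (Ppol_smul _ _) x) a]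

lemma res_inv_right (f : X → A → ℝ) (x : X) (a : A) :
    resolvent P c μ f x a - c * Ppol P μ (resolvent P c μ f) x a = f x a := by
  have h1 : Ppol P μ (resolvent P c μ f) x a = resolvent P c μ (Ppol P μ f) x a := by
    rw [Ppol_res hP hμ hc0 hc1 hμ f x a]
    refine tsum_congr fun t => ?_
    rw [← Function.iterate_succ_apply' (Ppol P μ) t f,
      Function.iterate_succ_apply (Ppol P μ) t f]
  rw [h1, res_shift hP hμ hc0 hc1 f x a]
  ring

lemma res_inv_left (f : X → A → ℝ) (x : X) (a : A) :
    resolvent P c μ (fun x a => f x a - c * Ppol P μ f x a) x a = f x a := by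
  have key : ∀ t : ℕ, c ^ t * ((Ppol P μ)^[t] fun x a => f x a - c * Ppol P μ f x a) x a
      = c ^ t * ((Ppol P μ)^[t] f) x a - c ^ (t + 1) * ((Ppol P μ)^[t + 1] f) x a := by
    intro t
    rw [iter_sub, iter_smul, Function.iterate_succ_apply, pow_succ']
    ring
  have hsa : Summable fun t : ℕ => c ^ t * ((Ppol P μ)^[t] f) x a :=
    summable_res hP hμ hc0 hc1 f x a
  have hsb : Summable fun t : ℕ => c ^ (t + 1) * ((Ppol P μ)^[t + 1] f) x a := by
    have : (fun t : ℕ => c ^ (t + 1) * ((Ppol P μ)^[t + 1] f) x a)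
        = fun t : ℕ => c * (c ^ t * ((Ppol P μ)^[t] (Ppol P μ f)) x a) := by
      funext t; rw [Function.iterate_succ_apply, pow_succ']; ring
    rw [this]
    exact (summable_res hP hμ hc0 hc1 (Ppol P μ f) x a).mul_left c
  show (∑' t : ℕ, c ^ t * ((Ppol P μ)^[t] fun x a => f x a - c * Ppol P μ f x a) x a) = f x a
  rw [tsum_congr key, Summable.tsum_sub hsa hsb]
  have h0 := Summable.tsum_eq_zero_add hsa
  simp only [pow_zero, Function.iterate_zero_apply, one_mul] at h0
  rw [h0]
  ring

end Res


section More

variable {P : X → A → X → ℝ} {γ lam : ℝ}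

lemma mixP_policy {c : ℝ} (hc0 : 0 ≤ c) (hc1 : c ≤ 1) {μ π : X → A → ℝ}
    (hμ : IsPolicy μ) (hπ : IsPolicy π) : IsPolicy (mixP c μ π) := by
  constructor
  · intro x a
    exact add_nonneg (mul_nonneg hc0 (hμ.1 x a)) (mul_nonneg (by linarith) (hπ.1 x a))
  · intro x
    show (∑ a, (c * μ x a + (1 - c) * π x a)) = 1
    rw [Finset.sum_add_distrib, ← Finset.mul_sum, ← Finset.mul_sum, hμ.2 x, hπ.2 x]
    ring

lemma polQ_mix (c : ℝ) (μ π Q : X → A → ℝ) (x : X) :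
    polQ (mixP c μ π) Q x = c * polQ μ Q x + (1 - c) * polQ π Q x := by
  show (∑ a, (c * μ x a + (1 - c) * π x a) * Q x a)
      = c * (∑ a, μ x a * Q x a) + (1 - c) * ∑ a, π x a * Q x a
  rw [Finset.mul_sum, Finset.mul_sum, ← Finset.sum_add_distrib]
  exact Finset.sum_congr rfl fun a _ => by ring

lemma Ppol_mix (c : ℝ) (μ π Q : X → A → ℝ) (x : X) (a : A) :
    Ppol P (mixP c μ π) Q x a = c * Ppol P μ Q x a + (1 - c) * Ppol P π Q x a := by
  show (∑ y, P x a y * polQ (mixP c μ π) Q y)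
      = c * (∑ y, P x a y * polQ μ Q y) + (1 - c) * ∑ y, P x a y * polQ π Q y
  rw [Finset.mul_sum, Finset.mul_sum, ← Finset.sum_add_distrib]
  refine Finset.sum_congr rfl fun y _ => ?_
  rw [polQ_mix]; ring

lemma polQ_le_ciSup [Nonempty A] {π : X → A → ℝ} (hπ : IsPolicy π) (Q : X → A → ℝ) (x : X) :
    polQ π Q x ≤ ⨆ a, Q x a := by
  have hb : ∀ a, Q x a ≤ ⨆ b, Q x b := fun a =>
    le_ciSup (Set.Finite.bddAbove (Set.finite_range _)) a
  have h1 : (∑ a, π x a * Q x a) ≤ ∑ a, π x a * (⨆ b, Q x b) :=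
    avg_le_avg _ _ _ (hπ.1 x) hb
  calc polQ π Q x = ∑ a, π x a * Q x a := rfl
    _ ≤ ∑ a, π x a * (⨆ b, Q x b) := h1
    _ = ⨆ b, Q x b := by rw [← Finset.sum_mul, hπ.2 x, one_mul]

section AopLemmas

variable {μl πl : X → A → ℝ}
variable (hP : IsKernel P) (hμl : IsPolicy μl) (hπl : IsPolicy πl)
variable (hγ0 : 0 ≤ γ) (hγ1 : γ < 1) (hlam0 : 0 ≤ lam) (hlam1 : lam ≤ 1)
include hP hμl hπl hγ0 hγ1 hlam0 hlam1

lemma c_nonneg : (0:ℝ) ≤ γ * lam := mul_nonneg hγ0 hlam0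

lemma c_lt_one : γ * lam < 1 :=
  lt_of_le_of_lt (by nlinarith) hγ1

lemma Aop_mono {f g : X → A → ℝ} (h : ∀ x a, f x a ≤ g x a) :
    ∀ x a, Aop P γ lam μl πl f x a ≤ Aop P γ lam μl πl g x a := by
  intro x a
  show γ * (1 - lam) * Ppol P πl (resolvent P (γ * lam) μl f) x a
      ≤ γ * (1 - lam) * Ppol P πl (resolvent P (γ * lam) μl g) x a
  refine mul_le_mul_of_nonneg_left ?_ (mul_nonneg hγ0 (by linarith))
  exact Ppol_mono hP hπl
    (fun x a => res_mono hP hμl (c_nonneg hP hμl hπl hγ0 hγ1 hlam0 hlam1) (c_lt_one hP hμl hπl hγ0 hγ1 hlam0 hlam1) h x a) x a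

lemma Ppol_zero' : Ppol P πl (fun _ _ => (0:ℝ)) = fun _ _ => (0:ℝ) := by
  funext x a
  show (∑ y, P x a y * ∑ b, πl y b * (0:ℝ)) = 0
  simp

lemma iter_zero' (t : ℕ) : (Ppol P μl)^[t] (fun _ _ => (0:ℝ)) = fun _ _ => (0:ℝ) := by
  induction t with
  | zero => rfl
  | succ t ih => rw [Function.iterate_succ_apply', ih]; exact Ppol_zero' (πl := μl) hP hμl hμl hγ0 hγ1 hlam0 hlam1

lemma res_zero' (x : X) (a : A) :
    resolvent P (γ * lam) μl (fun _ _ => (0:ℝ)) x a = 0 := by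
  show (∑' t : ℕ, (γ * lam) ^ t * ((Ppol P μl)^[t] fun _ _ => (0:ℝ)) x a) = 0
  have : ∀ t : ℕ, (γ * lam) ^ t * ((Ppol P μl)^[t] fun _ _ => (0:ℝ)) x a = 0 := by
    intro t; rw [iter_zero' hP hμl hπl hγ0 hγ1 hlam0 hlam1]; simp
  rw [tsum_congr this, tsum_zero]

lemma Aop_add (f g : X → A → ℝ) :
    Aop P γ lam μl πl (fun x a => f x a + g x a)
      = fun x a => Aop P γ lam μl πl f x a + Aop P γ lam μl πl g x a := by
  funext x a
  show γ * (1 - lam) * Ppol P πl (resolvent P (γ * lam) μl fun x a => f x a + g x a) x a = _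
  rw [Ppol_congr (ν := πl)
    (g := fun x a => resolvent P (γ * lam) μl f x a + resolvent P (γ * lam) μl g x a)
    (fun x a => res_add' hP hμl (c_nonneg hP hμl hπl hγ0 hγ1 hlam0 hlam1) (c_lt_one hP hμl hπl hγ0 hγ1 hlam0 hlam1) f g x a) x a,
    show Ppol P πl (fun x a => resolvent P (γ * lam) μl f x a
        + resolvent P (γ * lam) μl g x a) x a
      = Ppol P πl (resolvent P (γ * lam) μl f) x a
        + Ppol P πl (resolvent P (γ * lam) μl g) x a
      from congrFun (congrFun (Ppol_add _ _) x) a]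
  show _ = γ * (1 - lam) * Ppol P πl (resolvent P (γ * lam) μl f) x a
      + γ * (1 - lam) * Ppol P πl (resolvent P (γ * lam) μl g) x a
  ring

lemma Aop_zero :
    Aop P γ lam μl πl (fun _ _ => (0:ℝ)) = fun _ _ => (0:ℝ) := by
  funext x a
  show γ * (1 - lam) * Ppol P πl (resolvent P (γ * lam) μl fun _ _ => (0:ℝ)) x a = 0
  rw [Ppol_congr (ν := πl) (g := fun _ _ => (0:ℝ))
    (fun x a => res_zero' hP hμl hπl hγ0 hγ1 hlam0 hlam1 x a) x a,
    show Ppol P πl (fun _ _ => (0:ℝ)) x a = 0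
      from congrFun (congrFun (Ppol_zero' (P := P) (πl := πl) hP hμl hπl hγ0 hγ1 hlam0 hlam1) x) a]
  ring

lemma Aop_finsum {ι : Type*} (s : Finset ι) (T : ι → X → A → ℝ) :
    Aop P γ lam μl πl (fun x a => ∑ l ∈ s, T l x a)
      = fun x a => ∑ l ∈ s, Aop P γ lam μl πl (T l) x a := by
  classical
  induction s using Finset.induction_on with
  | empty => simpa using Aop_zero hP hμl hπl hγ0 hγ1 hlam0 hlam1
  | @insert i s hi ih =>
      have h1 : (fun x a => ∑ l ∈ insert i s, T l x a)
          = fun x a => T i x a + (fun x a => ∑ l ∈ s, T l x a) x a := by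
        funext x a; rw [Finset.sum_insert hi]
      rw [h1, Aop_add hP hμl hπl hγ0 hγ1 hlam0 hlam1, ih]
      funext x a; rw [Finset.sum_insert hi]

end AopLemmas

lemma opProd_mono (Aops : ℕ → (X → A → ℝ) → (X → A → ℝ))
    (hmono : ∀ l (f g : X → A → ℝ), (∀ x a, f x a ≤ g x a) → ∀ x a, Aops l f x a ≤ Aops l g x a)
    (m : ℕ) : ∀ (n : ℕ) (f g : X → A → ℝ), (∀ x a, f x a ≤ g x a) →
      ∀ x a, opProd Aops m n f x a ≤ opProd Aops m n g x a := by
  intro n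
  induction n with
  | zero => intro f g h; exact h
  | succ n ih => intro f g h; exact hmono (m + n) _ _ (ih f g h)

lemma step_lemma [Nonempty A] (r : X → A → ℝ) {α : ℝ}
    (hP : IsKernel P) (hγ0 : 0 ≤ γ) (hγ1 : γ < 1)
    (hlam0 : 0 ≤ lam) (hlam1 : lam ≤ 1) (hα0 : 0 ≤ α) (hα1 : α ≤ 1)
    {μk πk πk1 μk1 Qk Qk1 εk : X → A → ℝ}
    (hμk : IsPolicy μk) (hπk : IsPolicy πk) (hπk1 : IsPolicy πk1)
    (hμk1 : μk1 = mixP α πk1 μk)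
    (hQk1 : Qk1 = fun x a => peng P r γ lam μk πk Qk x a + εk x a)
    (hg : IsGreedy πk1 Qk1) :
    ∀ x a, Qk1 x a - bellman P r γ (mixP lam μk1 πk1) Qk1 x a
      ≤ Aop P γ lam μk πk
          (fun x a => Qk x a - bellman P r γ (mixP lam μk πk) Qk x a) x a
        + (εk x a - γ * Ppol P (mixP lam μk πk) εk x a) := by
  have hc0 : (0:ℝ) ≤ γ * lam := mul_nonneg hγ0 hlam0
  have hc1 : γ * lam < 1 := lt_of_le_of_lt (by nlinarith) hγ1
  -- greedy comparison
  have hA : ∀ x a, Ppol P (mixP lam μk πk) Qk1 x a ≤ Ppol P (mixP lam μk1 πk1) Qk1 x a := by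
    intro x a
    show (∑ y, P x a y * polQ (mixP lam μk πk) Qk1 y)
        ≤ ∑ y, P x a y * polQ (mixP lam μk1 πk1) Qk1 y
    refine avg_le_avg _ _ _ (hP.1 x a) fun y => ?_
    rw [polQ_mix, polQ_mix, hμk1, polQ_mix]
    have hS1 : polQ πk1 Qk1 y = ⨆ b, Qk1 y b := hg y
    have hm : polQ μk Qk1 y ≤ ⨆ b, Qk1 y b := polQ_le_ciSup hμk Qk1 y
    have hp : polQ πk Qk1 y ≤ ⨆ b, Qk1 y b := polQ_le_ciSup hπk Qk1 y
    rw [hS1]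
    nlinarith [mul_nonneg (mul_nonneg hlam0 hα0) (sub_nonneg.2 hm),
      mul_nonneg (sub_nonneg.2 hlam1) (sub_nonneg.2 hp)]
  -- the resolvent identity (I - γλ Pμ) G = r + γ(1-λ) Pπ Qk
  have e1 : ∀ x a, peng P r γ lam μk πk Qk x a
      - (γ * lam) * Ppol P μk (peng P r γ lam μk πk Qk) x a
      = r x a + γ * (1 - lam) * Ppol P πk Qk x a :=
    fun x a => res_inv_right hP hμk hc0 hc1
      (fun x a => r x a + γ * (1 - lam) * Ppol P πk Qk x a) x a
  -- Qk - G = R bk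
  have e5 : ∀ x a, Qk x a - peng P r γ lam μk πk Qk x a
      = resolvent P (γ * lam) μk
          (fun x a => Qk x a - bellman P r γ (mixP lam μk πk) Qk x a) x a := by
    intro x a
    have h1 : (fun x a => Qk x a - bellman P r γ (mixP lam μk πk) Qk x a)
        = fun x a => (fun x a => Qk x a - (γ * lam) * Ppol P μk Qk x a) x a
            - (fun x a => r x a + γ * (1 - lam) * Ppol P πk Qk x a) x a := by
      funext x a
      show Qk x a - (r x a + γ * Ppol P (mixP lam μk πk) Qk x a) = _
      rw [Ppol_mix]
      ring
    rw [h1, res_sub hP hμk hc0 hc1, res_inv_left hP hμk hc0 hc1 Qk x a]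
    rfl
  -- Aop identity
  have e3 : ∀ x a, Aop P γ lam μk πk
        (fun x a => Qk x a - bellman P r γ (mixP lam μk πk) Qk x a) x a
      = γ * (1 - lam) * (Ppol P πk Qk x a - Ppol P πk (peng P r γ lam μk πk Qk) x a) := by
    intro x a
    show γ * (1 - lam) * Ppol P πk (resolvent P (γ * lam) μk
        (fun x a => Qk x a - bellman P r γ (mixP lam μk πk) Qk x a)) x a = _
    rw [Ppol_congr (ν := πk)
        (g := fun x a => Qk x a - peng P r γ lam μk πk Qk x a)
        (fun x a => (e5 x a).symm) x a,
      show Ppol P πk (fun x a => Qk x a - peng P r γ lam μk πk Qk x a) x a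
          = Ppol P πk Qk x a - Ppol P πk (peng P r γ lam μk πk Qk) x a
        from congrFun (congrFun (Ppol_sub _ _) x) a]
  intro x a
  have h2 : γ * Ppol P (mixP lam μk πk) Qk1 x a
      ≤ γ * Ppol P (mixP lam μk1 πk1) Qk1 x a :=
    mul_le_mul_of_nonneg_left (hA x a) hγ0
  have f1 : Qk1 x a = peng P r γ lam μk πk Qk x a + εk x a := by rw [hQk1]
  have f2 : Ppol P (mixP lam μk πk) Qk1 x a
      = Ppol P (mixP lam μk πk) (peng P r γ lam μk πk Qk) x a
        + Ppol P (mixP lam μk πk) εk x a := by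
    rw [hQk1, Ppol_add (fun x a => peng P r γ lam μk πk Qk x a) εk]
  have f3 : Ppol P (mixP lam μk πk) (peng P r γ lam μk πk Qk) x a
      = lam * Ppol P μk (peng P r γ lam μk πk Qk) x a
        + (1 - lam) * Ppol P πk (peng P r γ lam μk πk Qk) x a :=
    Ppol_mix lam μk πk _ x a
  have f4 := e1 x a
  have f5 := e3 x a
  have goalEq : Qk1 x a - (r x a + γ * Ppol P (mixP lam μk πk) Qk1 x a)
      = Aop P γ lam μk πk
          (fun x a => Qk x a - bellman P r γ (mixP lam μk πk) Qk x a) x a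
        + (εk x a - γ * Ppol P (mixP lam μk πk) εk x a) := by
    linear_combination f1 - γ * f2 - γ * f3 + f4 - f5
  show Qk1 x a - (r x a + γ * Ppol P (mixP lam μk1 πk1) Qk1 x a) ≤ _
  linarith [goalEq, h2]

end More

end PQLAux

open PQLAux


/-- Bellman residual bound for Peng's Q(λ) with behavior policy updates:
with `b_l := Q_l - T^{ρ_l} Q_l`, `ρ_l = λμ_l+(1-λ)π_l`, `A_l = γ(1-λ)P^{π_l}∘(I-γλP^{μ_l})⁻¹`,
`b_k ≤ A_{k-1}⋯A_0 b_0 + ∑_{l<k} A_{k-1}⋯A_{l+1} ((I - γP^{ρ_l}) ε_l)` pointwise. -/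
theorem peng_bellman_residual_bound_policy_updates {X A : Type*} [Fintype X] [Fintype A]
    [Nonempty X] [Nonempty A]
    (P : X → A → X → ℝ) (r : X → A → ℝ) (γ lam α : ℝ)
    (hP : IsKernel P) (hγ0 : 0 ≤ γ) (hγ1 : γ < 1) (hlam0 : 0 ≤ lam) (hlam1 : lam ≤ 1)
    (hα0 : 1 - lam ≤ α) (hα1 : α ≤ 1)
    (μinit : X → A → ℝ) (hμinit : IsPolicy μinit)
    (Qseq πseq μseq : ℕ → X → A → ℝ) (ε : ℕ → X → A → ℝ)
    (hπpol : ∀ k, IsPolicy (πseq k)) (hπgreedy : ∀ k, IsGreedy (πseq k) (Qseq k))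
    (hμ0 : μseq 0 = mixP α (πseq 0) μinit)
    (hμs : ∀ k, μseq (k + 1) = mixP α (πseq (k + 1)) (μseq k))
    (hrec : ∀ k, Qseq (k + 1) = peng P r γ lam (μseq k) (πseq k) (Qseq k) + ε k) :
    ∀ k : ℕ,
      Qseq k - bellman P r γ (mixP lam (μseq k) (πseq k)) (Qseq k)
        ≤ opProd (fun l => Aop P γ lam (μseq l) (πseq l)) 0 k
              (Qseq 0 - bellman P r γ (mixP lam (μseq 0) (πseq 0)) (Qseq 0))
            + ∑ l ∈ Finset.range k,
                opProd (fun l => Aop P γ lam (μseq l) (πseq l)) (l + 1) (k - 1 - l)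
                (fun x a => ε l x a - γ * Ppol P (mixP lam (μseq l) (πseq l)) (ε l) x a) := by
  have hα0' : (0:ℝ) ≤ α := by linarith
  have hμpol : ∀ k, IsPolicy (μseq k) := by
    intro k
    induction k with
    | zero => rw [hμ0]; exact mixP_policy hα0' hα1 (hπpol 0) hμinit
    | succ k ih => rw [hμs k]; exact mixP_policy hα0' hα1 (hπpol (k+1)) ih
  have hstep : ∀ k x a,
      Qseq (k+1) x a - bellman P r γ (mixP lam (μseq (k+1)) (πseq (k+1))) (Qseq (k+1)) x a
        ≤ Aop P γ lam (μseq k) (πseq k)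
            (fun x a => Qseq k x a
              - bellman P r γ (mixP lam (μseq k) (πseq k)) (Qseq k) x a) x a
          + (ε k x a - γ * Ppol P (mixP lam (μseq k) (πseq k)) (ε k) x a) := by
    intro k
    exact step_lemma r hP hγ0 hγ1 hlam0 hlam1 hα0' hα1 (hμpol k) (hπpol k)
      (hπpol (k+1)) (hμs k) (by rw [hrec k]; rfl) (hπgreedy (k+1))
  intro k
  induction k with
  | zero => simp [opProd]
  | succ k IH =>
      have IH' : ∀ x a,
          Qseq k x a - bellman P r γ (mixP lam (μseq k) (πseq k)) (Qseq k) x a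
            ≤ opProd (fun l => Aop P γ lam (μseq l) (πseq l)) 0 k
                (Qseq 0 - bellman P r γ (mixP lam (μseq 0) (πseq 0)) (Qseq 0)) x a
              + ∑ l ∈ Finset.range k,
                  opProd (fun l => Aop P γ lam (μseq l) (πseq l)) (l + 1) (k - 1 - l)
                  (fun x a => ε l x a
                    - γ * Ppol P (mixP lam (μseq l) (πseq l)) (ε l) x a) x a := by
        intro x a
        have h := IH
        rw [Pi.le_def] at h
        have h2 := h x
        rw [Pi.le_def] at h2
        simpa using h2 a
      rw [Pi.le_def]; intro x; rw [Pi.le_def]; intro a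
      simp only [Pi.sub_apply, Pi.add_apply, Finset.sum_apply, Nat.add_sub_cancel]
      -- peel off the last summand
      rw [Finset.sum_range_succ, Nat.sub_self]
      have hlast : opProd (fun l => Aop P γ lam (μseq l) (πseq l)) (k+1) 0
          (fun x a => ε k x a - γ * Ppol P (mixP lam (μseq k) (πseq k)) (ε k) x a) x a
          = ε k x a - γ * Ppol P (mixP lam (μseq k) (πseq k)) (ε k) x a := rfl
      rw [hlast]
      -- rewrite sum terms through Aop k
      have hterm : ∀ l ∈ Finset.range k,
          opProd (fun l => Aop P γ lam (μseq l) (πseq l)) (l + 1) (k - l)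
            (fun x a => ε l x a
              - γ * Ppol P (mixP lam (μseq l) (πseq l)) (ε l) x a) x a
          = Aop P γ lam (μseq k) (πseq k)
              (opProd (fun l => Aop P γ lam (μseq l) (πseq l)) (l + 1) (k - 1 - l)
                (fun x a => ε l x a
                  - γ * Ppol P (mixP lam (μseq l) (πseq l)) (ε l) x a)) x a := by
        intro l hl
        have hlk : l < k := Finset.mem_range.mp hl
        have h1 : k - l = (k - 1 - l) + 1 := by omega
        rw [h1]
        have h2 : opProd (fun l => Aop P γ lam (μseq l) (πseq l)) (l + 1) ((k - 1 - l) + 1)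
            (fun x a => ε l x a - γ * Ppol P (mixP lam (μseq l) (πseq l)) (ε l) x a)
            = Aop P γ lam (μseq ((l + 1) + (k - 1 - l))) (πseq ((l + 1) + (k - 1 - l)))
              (opProd (fun l => Aop P γ lam (μseq l) (πseq l)) (l + 1) (k - 1 - l)
                (fun x a => ε l x a
                  - γ * Ppol P (mixP lam (μseq l) (πseq l)) (ε l) x a)) := rfl
        rw [h2, show (l + 1) + (k - 1 - l) = k from by omega]
      rw [Finset.sum_congr rfl hterm]
      -- head operator product
      have h6 : opProd (fun l => Aop P γ lam (μseq l) (πseq l)) 0 (k+1)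
          (Qseq 0 - bellman P r γ (mixP lam (μseq 0) (πseq 0)) (Qseq 0))
          = Aop P γ lam (μseq (0 + k)) (πseq (0 + k))
            (opProd (fun l => Aop P γ lam (μseq l) (πseq l)) 0 k
              (Qseq 0 - bellman P r γ (mixP lam (μseq 0) (πseq 0)) (Qseq 0))) := rfl
      rw [Nat.zero_add] at h6
      rw [h6]
      -- chain
      refine le_trans (hstep k x a) ?_
      have hmono := Aop_mono hP (hμpol k) (hπpol k) hγ0 hγ1 hlam0 hlam1
        (f := fun x a => Qseq k x a
          - bellman P r γ (mixP lam (μseq k) (πseq k)) (Qseq k) x a)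
        (g := fun x a =>
          opProd (fun l => Aop P γ lam (μseq l) (πseq l)) 0 k
            (Qseq 0 - bellman P r γ (mixP lam (μseq 0) (πseq 0)) (Qseq 0)) x a
          + ∑ l ∈ Finset.range k,
              opProd (fun l => Aop P γ lam (μseq l) (πseq l)) (l + 1) (k - 1 - l)
                (fun x a => ε l x a
                  - γ * Ppol P (mixP lam (μseq l) (πseq l)) (ε l) x a) x a)
        IH' x a
      have hsplit : Aop P γ lam (μseq k) (πseq k)
          (fun x a =>
            opProd (fun l => Aop P γ lam (μseq l) (πseq l)) 0 k
              (Qseq 0 - bellman P r γ (mixP lam (μseq 0) (πseq 0)) (Qseq 0)) x a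
            + ∑ l ∈ Finset.range k,
                opProd (fun l => Aop P γ lam (μseq l) (πseq l)) (l + 1) (k - 1 - l)
                  (fun x a => ε l x a
                    - γ * Ppol P (mixP lam (μseq l) (πseq l)) (ε l) x a) x a) x a
          = Aop P γ lam (μseq k) (πseq k)
              (opProd (fun l => Aop P γ lam (μseq l) (πseq l)) 0 k
                (Qseq 0 - bellman P r γ (mixP lam (μseq 0) (πseq 0)) (Qseq 0))) x a
            + ∑ l ∈ Finset.range k, Aop P γ lam (μseq k) (πseq k)
                (opProd (fun l => Aop P γ lam (μseq l) (πseq l)) (l + 1) (k - 1 - l)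
                  (fun x a => ε l x a
                    - γ * Ppol P (mixP lam (μseq l) (πseq l)) (ε l) x a)) x a := by
        calc _ = Aop P γ lam (μseq k) (πseq k)
              (opProd (fun l => Aop P γ lam (μseq l) (πseq l)) 0 k
                (Qseq 0 - bellman P r γ (mixP lam (μseq 0) (πseq 0)) (Qseq 0))) x a
            + Aop P γ lam (μseq k) (πseq k)
              (fun x a => ∑ l ∈ Finset.range k,
                opProd (fun l => Aop P γ lam (μseq l) (πseq l)) (l + 1) (k - 1 - l)
                  (fun x a => ε l x a
                    - γ * Ppol P (mixP lam (μseq l) (πseq l)) (ε l) x a) x a) x a :=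
              congrFun (congrFun (Aop_add hP (hμpol k) (hπpol k) hγ0 hγ1 hlam0 hlam1
                _ _) x) a
          _ = _ := by
              rw [congrFun (congrFun (Aop_finsum hP (hμpol k) (hπpol k) hγ0 hγ1 hlam0
                hlam1 (Finset.range k) _) x) a]
      rw [hsplit] at hmono
      linarith [hmono]
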